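/- Let J₁ ⊆ J₂ ⊆ I be ideals in a commutative ring R such that J₁ ∩ J₂ⁿ⁻¹ = J₁·J₂ⁿ⁻¹ and Iⁿ ⊆ J₂ⁿ + J₁ for all n ≥ 1. Then Iⁿ ⊆ J₂ⁿ + Σ_{j=0}^{n−1} Iʲ·(I·J₂^{n−j−1} ∩ J₁) for all n ≥ 1. -/

import Mathlib

/-- Inductive containment lemma: under the hypotheses,
`Iⁿ ⊆ J₂ⁿ + Σ_{j=0}^{n−1} Iʲ·(I·J₂^{n−j−1} ∩ J₁)` for all `n ≥ 1`. -/
theorem pow_le_sum_decomposition {R : Type*} [CommRing R]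
    (J₁ J₂ I : Ideal R) (h₁₂ : J₁ ≤ J₂) (h₂I : J₂ ≤ I)
    (h1 : ∀ n : ℕ, 1 ≤ n → J₁ ⊓ J₂ ^ (n - 1) = J₁ * J₂ ^ (n - 1))
    (h2 : ∀ n : ℕ, 1 ≤ n → I ^ n ≤ J₂ ^ n + J₁) :
    ∀ n : ℕ, 1 ≤ n →
      I ^ n ≤ J₂ ^ n + ∑ j ∈ Finset.range n, I ^ j * (I * J₂ ^ (n - j - 1) ⊓ J₁) := by
  intro n hn
  induction n with
  | zero => omega
  | succ n ih =>
    rcases Nat.eq_zero_or_pos n with rfl | hn'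
    · simp only [zero_add, pow_one, Finset.sum_range_one, pow_zero, one_mul, Nat.sub_self,
        mul_one]
      have hI : I ⊓ J₁ = J₁ := inf_eq_right.2 (h₁₂.trans h₂I)
      rw [hI]
      simpa using h2 1 le_rfl
    · have key : I * J₂ ^ n ≤ J₂ ^ (n + 1) + (I * J₂ ^ n ⊓ J₁) := by
        calc I * J₂ ^ n ≤ (J₂ + J₁) * J₂ ^ n :=
              Ideal.mul_mono_left (by simpa using h2 1 le_rfl)
          _ = J₂ ^ (n + 1) + J₁ * J₂ ^ n := by rw [add_mul, ← pow_succ']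
          _ ≤ J₂ ^ (n + 1) + (I * J₂ ^ n ⊓ J₁) := by
              refine add_le_add le_rfl (le_inf ?_ Ideal.mul_le_left)
              exact Ideal.mul_mono_left (h₁₂.trans h₂I)
      calc I ^ (n + 1) = I * I ^ n := by rw [pow_succ, mul_comm]
        _ ≤ I * (J₂ ^ n + ∑ j ∈ Finset.range n, I ^ j * (I * J₂ ^ (n - j - 1) ⊓ J₁)) :=
            Ideal.mul_mono_right (ih hn')
        _ = I * J₂ ^ n + ∑ j ∈ Finset.range n, I * (I ^ j * (I * J₂ ^ (n - j - 1) ⊓ J₁)) := by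
            rw [mul_add, Finset.mul_sum]
        _ ≤ (J₂ ^ (n + 1) + (I * J₂ ^ n ⊓ J₁)) +
              ∑ j ∈ Finset.range n, I ^ (j + 1) * (I * J₂ ^ (n + 1 - (j + 1) - 1) ⊓ J₁) := by
            refine add_le_add key (le_of_eq (Finset.sum_congr rfl fun j hj => ?_))
            have : n + 1 - (j + 1) - 1 = n - j - 1 := by omega
            rw [this, pow_succ, mul_comm (I ^ j) I, mul_assoc]
        _ = J₂ ^ (n + 1) + ∑ j ∈ Finset.range (n + 1), I ^ j * (I * J₂ ^ (n + 1 - j - 1) ⊓ J₁) := by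
            rw [Finset.sum_range_succ']
            simp only [pow_zero, one_mul, Nat.sub_zero, Nat.add_sub_cancel]
            abel
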